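/- On a steady gradient Ricci soliton, the Cao–Hamilton Harnack quantity P = 2Δv + |∇v|² + 3R satisfies LP = |∇∇v + Ric|² + 2 Ric(∇(v-f), ∇(v-f)), where L = ½(∂/∂t - Δ) - ∇v·∇. In particular if Ric ≥ 0 then LP ≥ (1/n)(Δv + R)² ≥ 0. -/

import Mathlib

open Finset in
/-- On a steady gradient Ricci soliton the Cao–Hamilton Harnack quantity
P = 2Δv + |∇v|² + 3R = 2Q + (|∇v|² + R) satisfies
LP = |∇∇v + Ric|² + 2 Ric(∇(v-f), ∇(v-f)); if Ric ≥ 0 then LP ≥ (1/n)(Δv + R)² ≥ 0.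
Pointwise model in an orthonormal frame: `A` = ∇∇v and `B` = Ric are symmetric n×n
matrices, `w` = ∇(v-f) is a vector, `lapv` = Δv and `R` the scalar curvature.
By linearity of L, LP = 2·LQ + L(|∇v|² + R); we assume the two previously established
identities LQ = |∇∇v|² + ⟨Ric, ∇∇v⟩ + Ric(∇(v-f), ∇(v-f)) and
L(|∇v|² + R) = |Ric|² - |∇∇v|², and the trace identity tr(∇∇v + Ric) = Δv + R
(steady soliton: R = -Δf). -/
theorem stmt10_Cao_Hamilton_Harnack
    (n : ℕ) (hn : 0 < n)
    (A B : Matrix (Fin n) (Fin n) ℝ)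
    (hA : A.IsSymm) (hB : B.IsSymm)
    (w : Fin n → ℝ)
    (lapv R LQ LG : ℝ)
    (hLQ : LQ = (∑ i, ∑ j, (A i j) ^ 2) + (∑ i, ∑ j, B i j * A i j)
      + ∑ i, ∑ j, B i j * w i * w j)
    (hLG : LG = (∑ i, ∑ j, (B i j) ^ 2) - ∑ i, ∑ j, (A i j) ^ 2)
    (htrace : ∑ i, (A + B) i i = lapv + R) :
    2 * LQ + LG
      = (∑ i, ∑ j, ((A + B) i j) ^ 2) + 2 * ∑ i, ∑ j, B i j * w i * w j
    ∧ (B.PosSemidef →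
        2 * LQ + LG ≥ (1 / n) * (lapv + R) ^ 2 ∧ (1 / n) * (lapv + R) ^ 2 ≥ 0) := by
  have key : 2 * LQ + LG
      = (∑ i, ∑ j, ((A + B) i j) ^ 2) + 2 * ∑ i, ∑ j, B i j * w i * w j := by
    subst hLQ hLG
    simp only [Matrix.add_apply, ← Finset.sum_add_distrib, ← Finset.sum_sub_distrib,
      Finset.mul_sum, ← Finset.sum_mul]
    exact Finset.sum_congr rfl fun i _ => Finset.sum_congr rfl fun j _ => by ring
  refine ⟨key, fun hPSD => ?_⟩
  have hBww : 0 ≤ ∑ i, ∑ j, B i j * w i * w j := by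
    have := hPSD.dotProduct_mulVec_nonneg w
    simp only [dotProduct, Matrix.mulVec, dotProduct, Pi.star_apply,
      star_trivial] at this
    calc (0:ℝ) ≤ ∑ i, w i * ∑ j, B i j * w j := this
      _ = ∑ i, ∑ j, B i j * w i * w j := by
          rw [Finset.sum_congr rfl]
          intro i _
          rw [Finset.mul_sum]
          exact Finset.sum_congr rfl fun j _ => by ring
  have hdiag : (∑ i, (A + B) i i) ^ 2 ≤ n * ∑ i, ((A + B) i i) ^ 2 := by
    simpa using sq_sum_le_card_mul_sum_sq (s := Finset.univ)
      (f := fun i => (A + B) i i)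
  have hfull : ∑ i, ((A + B) i i) ^ 2 ≤ ∑ i, ∑ j, ((A + B) i j) ^ 2 := by
    apply Finset.sum_le_sum
    intro i _
    have : ((A + B) i i) ^ 2 = ∑ j ∈ {i}, ((A + B) i j) ^ 2 := by simp
    rw [this]
    exact Finset.sum_le_sum_of_subset_of_nonneg (Finset.subset_univ _)
      (fun j _ _ => sq_nonneg _)
  have hn' : (0:ℝ) < n := by exact_mod_cast hn
  constructor
  · rw [key, ← htrace]
    have h1 : (1 / (n:ℝ)) * (∑ i, (A + B) i i) ^ 2 ≤ ∑ i, ∑ j, ((A + B) i j) ^ 2 := by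
      rw [div_mul_eq_mul_div, one_mul, div_le_iff₀ hn']
      calc (∑ i, (A + B) i i) ^ 2 ≤ n * ∑ i, ((A + B) i i) ^ 2 := hdiag
        _ ≤ n * ∑ i, ∑ j, ((A + B) i j) ^ 2 := by nlinarith
        _ = (∑ i, ∑ j, ((A + B) i j) ^ 2) * n := mul_comm _ _
    linarith
  · positivity
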